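/- Let OPT(w)[a,d] denote the maximum weight of an independent set among requests whose time intervals are contained in [a,d], and OPT(w)[a,x,d] the maximum among requests with arrival in [a,x], departure in [x,d], and active at time x. Then for any a ≤ x ≤ d and any nonnegative weights w: OPT(w)[a,d] ≤ OPT(w)[a,x,d] + OPT(w)[a,x] + OPT(w)[x,d]. -/

import Mathlib

open scoped Classical in
/-- Maximum weight of a conflict-free set of requests satisfying predicate `P`;
two requests conflict iff they are adjacent in `G` and their time intervals intersect. -/
noncomputable def optTime {V : Type*} [Fintype V] (G : SimpleGraph V)
    (arr dep : V → ℝ) (w : V → NNReal) (P : V → Prop) : NNReal :=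
  (Finset.univ : Finset V).powerset.sup fun S =>
    if (∀ v ∈ S, P v) ∧ (∀ u ∈ S, ∀ v ∈ S, u ≠ v →
        ¬ (G.Adj u v ∧ max (arr u) (arr v) ≤ min (dep u) (dep v))) then
      ∑ v ∈ S, w v
    else 0

theorem stmt9 {V : Type*} [Fintype V] (G : SimpleGraph V) (arr dep : V → ℝ)
    (hvalid : ∀ v, arr v ≤ dep v) (w : V → NNReal)
    (a x d : ℝ) (hax : a ≤ x) (hxd : x ≤ d) :
    optTime G arr dep w (fun v => a ≤ arr v ∧ dep v ≤ d) ≤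
      optTime G arr dep w (fun v => a ≤ arr v ∧ arr v ≤ x ∧ x ≤ dep v ∧ dep v ≤ d) +
      optTime G arr dep w (fun v => a ≤ arr v ∧ dep v ≤ x) +
      optTime G arr dep w (fun v => x ≤ arr v ∧ dep v ≤ d) := by
  classical
  have key : ∀ (Q : V → Prop) (S : Finset V), (∀ v ∈ S, Q v) →
      (∀ u ∈ S, ∀ v ∈ S, u ≠ v →
        ¬ (G.Adj u v ∧ max (arr u) (arr v) ≤ min (dep u) (dep v))) →
      ∑ v ∈ S, w v ≤ optTime G arr dep w Q := by
    intro Q S hP hCF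
    refine le_trans ?_ (Finset.le_sup (f := fun S =>
      if (∀ v ∈ S, Q v) ∧ (∀ u ∈ S, ∀ v ∈ S, u ≠ v →
        ¬ (G.Adj u v ∧ max (arr u) (arr v) ≤ min (dep u) (dep v))) then
        ∑ v ∈ S, w v else 0)
      (Finset.mem_powerset.mpr (Finset.subset_univ S)))
    rw [if_pos ⟨hP, hCF⟩]
  rw [optTime]
  apply Finset.sup_le
  intro S _
  split_ifs with h
  · obtain ⟨hP, hCF⟩ := h
    set p : V → Prop := fun v => arr v ≤ x ∧ x ≤ dep v with hp
    set q : V → Prop := fun v => dep v ≤ x with hq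
    have hsplit : ∑ v ∈ S, w v =
        (∑ v ∈ S.filter p, w v) +
        ((∑ v ∈ (S.filter (fun v => ¬ p v)).filter q, w v) +
         (∑ v ∈ (S.filter (fun v => ¬ p v)).filter (fun v => ¬ q v), w v)) := by
      rw [Finset.sum_filter_add_sum_filter_not, Finset.sum_filter_add_sum_filter_not]
    rw [hsplit, ← add_assoc]
    have hsub1 : ∀ v ∈ S.filter p, v ∈ S := fun v hv => (Finset.mem_filter.mp hv).1
    have hsub2 : ∀ v ∈ (S.filter (fun v => ¬ p v)).filter q, v ∈ S := fun v hv =>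
      (Finset.mem_filter.mp (Finset.mem_filter.mp hv).1).1
    have hsub3 : ∀ v ∈ (S.filter (fun v => ¬ p v)).filter (fun v => ¬ q v), v ∈ S :=
      fun v hv => (Finset.mem_filter.mp (Finset.mem_filter.mp hv).1).1
    gcongr
    · refine key _ _ (fun v hv => ?_) (fun u hu v hv => hCF u (hsub1 u hu) v (hsub1 v hv))
      obtain ⟨hvS, hpv⟩ := Finset.mem_filter.mp hv
      exact ⟨(hP v hvS).1, hpv.1, hpv.2, (hP v hvS).2⟩
    · refine key _ _ (fun v hv => ?_) (fun u hu v hv => hCF u (hsub2 u hu) v (hsub2 v hv))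
      have hqv := (Finset.mem_filter.mp hv).2
      exact ⟨(hP v (hsub2 v hv)).1, hqv⟩
    · refine key _ _ (fun v hv => ?_) (fun u hu v hv => hCF u (hsub3 u hu) v (hsub3 v hv))
      obtain ⟨hv1, hnq⟩ := Finset.mem_filter.mp hv
      have hnp := (Finset.mem_filter.mp hv1).2
      have hxdep : x ≤ dep v := le_of_lt (lt_of_not_ge hnq)
      have harr : x ≤ arr v := by
        by_contra hc
        exact hnp ⟨le_of_lt (lt_of_not_ge hc), hxdep⟩
      exact ⟨harr, (hP v (hsub3 v hv)).2⟩
  · exact zero_le
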